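/- arXiv:2208.02045 — 2 statements merged into one kernel-verified Lean document; each statement's English description precedes it below -/
import Mathlib

section
/- Let p₁, p₂ ∈ (0,1) with p₁+p₂=1 and let H₁, H₂ be nonempty graphs. Then (H₁,H₂) is (p₁,p₂)-common if and only if for every kernel U with -p₁ ≤ U(x,y) ≤ p₂ pointwise, the quantity Σ_{E⊆E(H₁), |E|≥2} t(H₁[E],U)/(e(H₁)p₁^{|E|-1}) + Σ_{E⊆E(H₂), |E|≥2} (-1)^{|E|} t(H₂[E],U)/(e(H₂)p₂^{|E|-1}) is non-negative. -/
open MeasureTheory Finset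

/-- The uniform measure on the unit interval `[0,1]`, as a measure on `ℝ`. -/
noncomputable def unitM : Measure ℝ := volume.restrict (Set.Icc 0 1)

instance : SigmaFinite unitM := by unfold unitM; infer_instance

/-- Value of a symmetric two-variable function on an unordered pair of vertices. -/
noncomputable def symEdge {α : Type*} (W : ℝ → ℝ → ℝ) (x : α → ℝ) : Sym2 α → ℝ :=
  Sym2.lift ⟨fun u v => (W (x u) (x v) + W (x v) (x u)) / 2, fun u v => by ring⟩

open Classical in
/-- Homomorphism density of a finite simple graph in a kernel. -/
noncomputable def homDensity {V : Type*} [Fintype V] (G : SimpleGraph V)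
    (W : ℝ → ℝ → ℝ) : ℝ :=
  ∫ x : V → ℝ, ∏ e ∈ G.edgeFinset, symEdge W x e ∂(Measure.pi fun _ => unitM)

/-- Number of edges of a graph. -/
noncomputable def eCount {V : Type*} (G : SimpleGraph V) : ℕ := G.edgeSet.ncard

def IsSymm2 (W : ℝ → ℝ → ℝ) : Prop := ∀ x y, W x y = W y x

/-- A kernel: bounded, symmetric, measurable. -/
def IsKernel (W : ℝ → ℝ → ℝ) : Prop :=
  Measurable (Function.uncurry W) ∧ IsSymm2 W ∧ ∃ C, ∀ x y, |W x y| ≤ C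

/-- A graphon: symmetric measurable with values in `[0,1]`. -/
def IsGraphon (W : ℝ → ℝ → ℝ) : Prop :=
  Measurable (Function.uncurry W) ∧ IsSymm2 W ∧ ∀ x y, W x y ∈ Set.Icc (0:ℝ) 1

/-- The pair `(G₁, G₂)` is `(p₁,p₂)`-common. -/
def IsCommonPair {V₁ V₂ : Type*} [Fintype V₁] [Fintype V₂]
    (G₁ : SimpleGraph V₁) (G₂ : SimpleGraph V₂) (p₁ p₂ : ℝ) : Prop :=
  ∀ W₁ W₂ : ℝ → ℝ → ℝ, IsGraphon W₁ → IsGraphon W₂ → (∀ x y, W₁ x y + W₂ x y = 1) →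
    homDensity G₁ W₁ / (eCount G₁ * p₁ ^ (eCount G₁ - 1))
      + homDensity G₂ W₂ / (eCount G₂ * p₂ ^ (eCount G₂ - 1))
      ≥ p₁ / eCount G₁ + p₂ / eCount G₂

/-! ### Auxiliary lemmas -/

instance : IsProbabilityMeasure unitM := by
  constructor
  unfold unitM
  simp [Real.volume_Icc]

noncomputable def piM (V : Type*) [Fintype V] : Measure (V → ℝ) :=
  Measure.pi fun _ => unitM

instance (V : Type*) [Fintype V] : IsProbabilityMeasure (piM V) := by
  unfold piM; infer_instance

lemma symEdge_mk {α : Type*} (W : ℝ → ℝ → ℝ) (x : α → ℝ) (u v : α) :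
    symEdge W x s(u, v) = (W (x u) (x v) + W (x v) (x u)) / 2 := rfl

lemma symEdge_of_symm {α : Type*} {W : ℝ → ℝ → ℝ} (hW : IsSymm2 W) (x : α → ℝ)
    (u v : α) : symEdge W x s(u, v) = W (x u) (x v) := by
  rw [symEdge_mk, hW (x v) (x u)]; ring

lemma measurable_symEdge {V : Type*} [Fintype V] {W : ℝ → ℝ → ℝ}
    (hW : Measurable (Function.uncurry W)) (e : Sym2 V) :
    Measurable fun x : V → ℝ => symEdge W x e := by
  induction e using Sym2.ind with
  | _ u v =>
    have g1 : Measurable fun x : V → ℝ => ((x u, x v) : ℝ × ℝ) :=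
      (measurable_pi_apply u).prodMk (measurable_pi_apply v)
    have g2 : Measurable fun x : V → ℝ => ((x v, x u) : ℝ × ℝ) :=
      (measurable_pi_apply v).prodMk (measurable_pi_apply u)
    have h1 : Measurable fun x : V → ℝ => W (x u) (x v) := hW.comp g1
    have h2 : Measurable fun x : V → ℝ => W (x v) (x u) := hW.comp g2
    simpa [symEdge_mk] using (h1.add h2).div_const 2

lemma abs_symEdge_le {V : Type*} {W : ℝ → ℝ → ℝ} {C : ℝ} (hC : ∀ x y, |W x y| ≤ C)
    (x : V → ℝ) (e : Sym2 V) : |symEdge W x e| ≤ C := by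
  induction e using Sym2.ind with
  | _ u v =>
    rw [symEdge_mk]
    calc |(W (x u) (x v) + W (x v) (x u)) / 2|
        ≤ (|W (x u) (x v)| + |W (x v) (x u)|) / 2 := by
          rw [abs_div]; simp only [abs_two]
          gcongr; exact abs_add_le _ _
      _ ≤ (C + C) / 2 := by gcongr <;> [exact hC _ _; exact hC _ _]
      _ = C := by ring

lemma C_nonneg {W : ℝ → ℝ → ℝ} {C : ℝ} (hC : ∀ x y, |W x y| ≤ C) : 0 ≤ C :=
  le_trans (abs_nonneg _) (hC 0 0)

lemma measurable_prod_symEdge {V : Type*} [Fintype V] {W : ℝ → ℝ → ℝ}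
    (hW : Measurable (Function.uncurry W)) (F : Finset (Sym2 V)) :
    Measurable fun x : V → ℝ => ∏ e ∈ F, symEdge W x e :=
  Finset.measurable_prod F fun e _ => measurable_symEdge hW e

lemma integrable_prod_symEdge {V : Type*} [Fintype V] {W : ℝ → ℝ → ℝ}
    (hW : Measurable (Function.uncurry W)) {C : ℝ} (hC : ∀ x y, |W x y| ≤ C)
    (F : Finset (Sym2 V)) :
    Integrable (fun x : V → ℝ => ∏ e ∈ F, symEdge W x e) (piM V) := by
  refine (integrable_const (C ^ F.card)).mono'
    (measurable_prod_symEdge hW F).aestronglyMeasurable (ae_of_all _ fun x => ?_)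
  calc ‖∏ e ∈ F, symEdge W x e‖ = |∏ e ∈ F, symEdge W x e| := rfl
    _ ≤ ∏ e ∈ F, |symEdge W x e| := by rw [Finset.abs_prod]
    _ ≤ ∏ e ∈ F, C := Finset.prod_le_prod (fun e _ => abs_nonneg _)
        (fun e _ => abs_symEdge_le hC x e)
    _ = C ^ F.card := Finset.prod_const C

open Classical in
noncomputable def kdens {V : Type*} [Fintype V] (F : Finset (Sym2 V)) (W : ℝ → ℝ → ℝ) : ℝ :=
  ∫ x : V → ℝ, ∏ e ∈ F, symEdge W x e ∂(piM V)

lemma dens_empty {V : Type*} [Fintype V] (W : ℝ → ℝ → ℝ) :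
    kdens (∅ : Finset (Sym2 V)) W = 1 := by
  simp [kdens]

lemma map_pair {V : Type*} [Fintype V] [DecidableEq V] {u v : V} (huv : u ≠ v) :
    Measure.map (fun x : V → ℝ => (x u, x v)) (piM V) = unitM.prod unitM := by
  refine (Measure.prod_eq fun s t hs ht => ?_).symm
  rw [Measure.map_apply ((measurable_pi_apply u).prodMk (measurable_pi_apply v))
    (hs.prod ht)]
  have hpre : (fun x : V → ℝ => (x u, x v)) ⁻¹' (s ×ˢ t)
      = Set.pi Set.univ (fun i => if i = u then s else if i = v then t else Set.univ) := by
    ext x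
    simp only [Set.mem_preimage, Set.mem_prod, Set.mem_pi, Set.mem_univ, true_implies]
    constructor
    · rintro ⟨h1, h2⟩ i
      by_cases hiu : i = u
      · subst hiu; simp [h1, huv]
      · by_cases hiv : i = v
        · subst hiv; simp [hiu, h2]
        · simp [hiu, hiv]
    · intro h
      refine ⟨?_, ?_⟩
      · have := h u; simpa using this
      · have := h v; simpa [huv.symm] using this
  rw [hpre]
  unfold piM
  rw [Measure.pi_pi]
  rw [← Finset.prod_subset (Finset.subset_univ ({u, v} : Finset V))
    (fun i _ hi => by
      simp only [Finset.mem_insert, Finset.mem_singleton, not_or] at hi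
      simp [hi.1, hi.2])]
  rw [Finset.prod_pair huv]
  simp [huv.symm]

lemma pair_integral {V : Type*} [Fintype V] [DecidableEq V] {u v : V} (huv : u ≠ v)
    {W : ℝ → ℝ → ℝ} (hW : Measurable (Function.uncurry W)) {C : ℝ}
    (hC : ∀ x y, |W x y| ≤ C) :
    ∫ x : V → ℝ, W (x u) (x v) ∂(piM V) = ∫ a, ∫ b, W a b ∂unitM ∂unitM := by
  have hmeas : Measurable fun x : V → ℝ => (x u, x v) :=
    (measurable_pi_apply u).prodMk (measurable_pi_apply v)
  have h1 : ∫ x : V → ℝ, W (x u) (x v) ∂(piM V)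
      = ∫ p : ℝ × ℝ, Function.uncurry W p ∂(unitM.prod unitM) := by
    rw [← map_pair huv, integral_map hmeas.aemeasurable hW.aestronglyMeasurable]
    rfl
  rw [h1]
  have hint : Integrable (Function.uncurry W) (unitM.prod unitM) :=
    (integrable_const C).mono' hW.aestronglyMeasurable
      (ae_of_all _ fun p => hC p.1 p.2)
  rw [MeasureTheory.integral_prod _ hint]
  rfl

lemma dens_singleton {V : Type*} [Fintype V] {W : ℝ → ℝ → ℝ} (hK : IsKernel W)
    {e : Sym2 V} (he : ¬ e.IsDiag) :
    kdens {e} W = ∫ a, ∫ b, W a b ∂unitM ∂unitM := by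
  classical
  obtain ⟨hW, hsymm, C, hC⟩ := hK
  induction e using Sym2.ind with
  | _ u v =>
    have huv : u ≠ v := by simpa using he
    unfold kdens
    simp only [Finset.prod_singleton]
    have : ∀ x : V → ℝ, symEdge W x s(u, v) = W (x u) (x v) :=
      fun x => symEdge_of_symm hsymm x u v
    rw [integral_congr_ae (ae_of_all _ this)]
    exact pair_integral huv hW hC

lemma symEdge_const_add {α : Type*} (p : ℝ) (W : ℝ → ℝ → ℝ) (x : α → ℝ) (e : Sym2 α) :
    symEdge (fun a b => p + W a b) x e = symEdge W x e + p := by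
  induction e using Sym2.ind with
  | _ u v => simp only [symEdge_mk]; ring

lemma symEdge_neg {α : Type*} (W : ℝ → ℝ → ℝ) (x : α → ℝ) (e : Sym2 α) :
    symEdge (fun a b => -W a b) x e = -symEdge W x e := by
  induction e using Sym2.ind with
  | _ u v => simp only [symEdge_mk]; ring

lemma dens_neg {V : Type*} [Fintype V] (W : ℝ → ℝ → ℝ) (E : Finset (Sym2 V)) :
    kdens E (fun a b => -W a b) = (-1 : ℝ) ^ E.card * kdens E W := by
  unfold kdens
  rw [← integral_const_mul]
  congr 1
  ext x
  rw [Finset.prod_congr rfl fun e _ => symEdge_neg W x e]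
  have : ∀ e ∈ E, -symEdge W x e = (-1) * symEdge W x e := fun e _ => by ring
  rw [Finset.prod_congr rfl this, Finset.prod_mul_distrib, Finset.prod_const]

lemma dens_const_add {V : Type*} [Fintype V] {W : ℝ → ℝ → ℝ}
    (hW : Measurable (Function.uncurry W)) {C : ℝ} (hC : ∀ x y, |W x y| ≤ C)
    (p : ℝ) (F : Finset (Sym2 V)) :
    kdens F (fun a b => p + W a b)
      = ∑ E ∈ F.powerset, kdens E W * p ^ (F.card - E.card) := by
  classical
  unfold kdens
  have hstep : ∀ x : V → ℝ, ∏ e ∈ F, symEdge (fun a b => p + W a b) x e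
      = ∑ E ∈ F.powerset, (∏ e ∈ E, symEdge W x e) * p ^ (F.card - E.card) := by
    intro x
    rw [Finset.prod_congr rfl fun e _ => symEdge_const_add p W x e]
    rw [Finset.prod_add]
    refine Finset.sum_congr rfl fun E hE => ?_
    rw [Finset.prod_const, Finset.card_sdiff_of_subset (Finset.mem_powerset.mp hE)]
  rw [integral_congr_ae (ae_of_all _ hstep)]
  rw [integral_finset_sum _ fun E _ =>
    ((integrable_prod_symEdge hW hC E).mul_const _)]
  exact Finset.sum_congr rfl fun E _ => integral_mul_const _ _

lemma eCount_eq_card {V : Type*} [Fintype V] (G : SimpleGraph V)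
    [Fintype G.edgeSet] : eCount G = G.edgeFinset.card := by
  simp only [eCount]; rw [← SimpleGraph.coe_edgeFinset, Set.ncard_coe_finset]


lemma kdens_const_mul {V : Type*} [Fintype V] (c : ℝ) (W : ℝ → ℝ → ℝ)
    (E : Finset (Sym2 V)) :
    kdens E (fun a b => c * W a b) = c ^ E.card * kdens E W := by
  unfold kdens
  rw [← integral_const_mul]
  congr 1
  ext x
  have hse : ∀ e ∈ E, symEdge (fun a b => c * W a b) x e = c * symEdge W x e := by
    intro e _
    induction e using Sym2.ind with
    | _ u v => simp only [symEdge_mk]; ring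
  rw [Finset.prod_congr rfl hse, Finset.prod_mul_distrib, Finset.prod_const]

open Classical in
lemma edgeFinset_fromEdgeSet {V : Type*} [Fintype V] {G : SimpleGraph V}
    [Fintype G.edgeSet] {E : Finset (Sym2 V)} (hE : E ⊆ G.edgeFinset)
    {inst : Fintype (SimpleGraph.fromEdgeSet (E : Set (Sym2 V))).edgeSet} :
    (SimpleGraph.fromEdgeSet (E : Set (Sym2 V))).edgeFinset = E := by
  apply Finset.coe_injective
  rw [SimpleGraph.coe_edgeFinset, SimpleGraph.edgeSet_fromEdgeSet]
  ext e
  simp only [Set.mem_diff, Finset.mem_coe, Set.mem_setOf_eq]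
  constructor
  · rintro ⟨h, _⟩; exact h
  · intro h
    refine ⟨h, SimpleGraph.not_isDiag_of_mem_edgeSet G ?_⟩
    rw [← SimpleGraph.mem_edgeFinset]; exact hE h

open Classical in
lemma homDensity_eq_kdens {V : Type*} [Fintype V] (G : SimpleGraph V)
    [inst : Fintype G.edgeSet] (W : ℝ → ℝ → ℝ) :
    homDensity G W = kdens G.edgeFinset W := by
  unfold homDensity kdens piM
  congr 1
  funext x
  congr 1
  apply Finset.coe_injective
  rw [SimpleGraph.coe_edgeFinset, SimpleGraph.coe_edgeFinset]

open Classical in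
lemma homDensity_fromEdgeSet {V : Type*} [Fintype V] (G : SimpleGraph V)
    [Fintype G.edgeSet] {E : Finset (Sym2 V)} (hE : E ⊆ G.edgeFinset)
    (W : ℝ → ℝ → ℝ) :
    homDensity (SimpleGraph.fromEdgeSet (E : Set (Sym2 V))) W = kdens E W := by
  rw [homDensity_eq_kdens, edgeFinset_fromEdgeSet hE]

open Classical in
lemma single_expansion {V : Type*} [Fintype V] (G : SimpleGraph V)
    [Fintype G.edgeSet] (h1 : 1 ≤ eCount G)
    {U : ℝ → ℝ → ℝ} (hK : IsKernel U) {p ε : ℝ} (hp : 0 < p)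
    (hε : ε = 1 ∨ ε = -1) :
    homDensity G (fun a b => p + ε * U a b) / ((eCount G : ℝ) * p ^ (eCount G - 1))
      = p / (eCount G : ℝ) + ε * (∫ a, ∫ b, U a b ∂unitM ∂unitM)
        + ∑ E ∈ G.edgeFinset.powerset.filter (fun E => 2 ≤ E.card),
            ε ^ E.card * homDensity (SimpleGraph.fromEdgeSet (E : Set (Sym2 V))) U
              / ((eCount G : ℝ) * p ^ (E.card - 1)) := by
  obtain ⟨hU, hsymm, C, hC⟩ := hK
  have habsε : |ε| = 1 := by rcases hε with h | h <;> simp [h]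
  have hUε : Measurable (Function.uncurry fun a b => ε * U a b) := by
    have : (Function.uncurry fun a b => ε * U a b)
        = fun q : ℝ × ℝ => ε * Function.uncurry U q := rfl
    rw [this]; exact hU.const_mul ε
  have hCε : ∀ x y, |ε * U x y| ≤ C := fun x y => by
    rw [abs_mul, habsε, one_mul]; exact hC x y
  set F := G.edgeFinset with hF
  have hcard : eCount G = F.card := eCount_eq_card G
  have hNpos : (0 : ℝ) < (eCount G : ℝ) := by exact_mod_cast h1
  have hNe : ((eCount G : ℝ)) ≠ 0 := ne_of_gt hNpos
  have hpne : p ≠ 0 := ne_of_gt hp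
  -- expand
  rw [homDensity_eq_kdens]
  have hexp : kdens F (fun a b => p + ε * U a b)
      = ∑ E ∈ F.powerset, kdens E (fun a b => ε * U a b) * p ^ (F.card - E.card) :=
    dens_const_add hUε hCε p F
  rw [hexp, Finset.sum_div]
  -- rewrite each kdens with the sign
  have hterm : ∀ E ∈ F.powerset,
      kdens E (fun a b => ε * U a b) * p ^ (F.card - E.card)
          / ((eCount G : ℝ) * p ^ (eCount G - 1))
        = ε ^ E.card * kdens E U * p ^ (F.card - E.card)
          / ((eCount G : ℝ) * p ^ (eCount G - 1)) := fun E _ => by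
    rw [kdens_const_mul]
  rw [Finset.sum_congr rfl hterm]
  -- split the powerset
  rw [← Finset.sum_filter_add_sum_filter_not F.powerset (fun E => 2 ≤ E.card)]
  have hsmall : F.powerset.filter (fun E => ¬ 2 ≤ E.card)
      = insert ∅ (F.powersetCard 1) := by
    ext E
    simp only [Finset.mem_filter, Finset.mem_powerset, Finset.mem_insert,
      Finset.mem_powersetCard, not_le]
    constructor
    · rintro ⟨hsub, hlt⟩
      have hor : E.card = 0 ∨ E.card = 1 := by omega
      rcases hor with h0 | hh1
      · left; exact Finset.card_eq_zero.mp h0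
      · right; exact ⟨hsub, hh1⟩
    · rintro (rfl | ⟨hsub, hc⟩)
      · simp
      · exact ⟨hsub, by omega⟩
  rw [hsmall, Finset.sum_insert (by
    simp [Finset.mem_powersetCard])]
  -- empty set term
  have hempty : ε ^ (∅ : Finset (Sym2 V)).card * kdens (∅ : Finset (Sym2 V)) U
      * p ^ (F.card - (∅ : Finset (Sym2 V)).card) / ((eCount G : ℝ) * p ^ (eCount G - 1))
      = p / (eCount G : ℝ) := by
    rw [_root_.dens_empty]
    simp only [Finset.card_empty, pow_zero, one_mul, Nat.sub_zero, mul_one]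
    rw [← hcard]
    have hpow : p ^ eCount G = p * p ^ (eCount G - 1) := by
      rw [← pow_succ']
      congr 1
      omega
    rw [hpow]
    field_simp
    try ring
  rw [hempty]
  -- singleton terms
  have hsingle : ∑ E ∈ F.powersetCard 1,
      ε ^ E.card * kdens E U * p ^ (F.card - E.card) / ((eCount G : ℝ) * p ^ (eCount G - 1))
      = ε * (∫ a, ∫ b, U a b ∂unitM ∂unitM) := by
    rw [Finset.powersetCard_one, Finset.sum_map]
    have hptw : ∀ e ∈ F, ε ^ ({e} : Finset (Sym2 V)).card * kdens ({e} : Finset (Sym2 V)) U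
        * p ^ (F.card - ({e} : Finset (Sym2 V)).card) / ((eCount G : ℝ) * p ^ (eCount G - 1))
        = ε * (∫ a, ∫ b, U a b ∂unitM ∂unitM) / (eCount G : ℝ) := by
      intro e he
      have hdiag : ¬ e.IsDiag := SimpleGraph.not_isDiag_of_mem_edgeSet G
        (SimpleGraph.mem_edgeFinset.mp he)
      rw [dens_singleton ⟨hU, hsymm, C, hC⟩ hdiag]
      simp only [Finset.card_singleton, pow_one]
      rw [← hcard]
      field_simp
      try ring
    calc ∑ e ∈ F, ε ^ ({e} : Finset (Sym2 V)).card * kdens ({e} : Finset (Sym2 V)) U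
          * p ^ (F.card - ({e} : Finset (Sym2 V)).card) / ((eCount G : ℝ) * p ^ (eCount G - 1))
        = ∑ _e ∈ F, ε * (∫ a, ∫ b, U a b ∂unitM ∂unitM) / (eCount G : ℝ) :=
          Finset.sum_congr rfl hptw
      _ = F.card * (ε * (∫ a, ∫ b, U a b ∂unitM ∂unitM) / (eCount G : ℝ)) := by
          rw [Finset.sum_const, nsmul_eq_mul]
      _ = ε * (∫ a, ∫ b, U a b ∂unitM ∂unitM) := by
          rw [← hcard]; field_simp; try ring
  rw [hsingle]
  -- the main terms
  have hmain : ∀ E ∈ F.powerset.filter (fun E => 2 ≤ E.card),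
      ε ^ E.card * kdens E U * p ^ (F.card - E.card) / ((eCount G : ℝ) * p ^ (eCount G - 1))
      = ε ^ E.card * homDensity (SimpleGraph.fromEdgeSet (E : Set (Sym2 V))) U
          / ((eCount G : ℝ) * p ^ (E.card - 1)) := by
    intro E hE
    rw [Finset.mem_filter, Finset.mem_powerset] at hE
    obtain ⟨hsub, hc2⟩ := hE
    have hle : E.card ≤ F.card := Finset.card_le_card hsub
    rw [homDensity_fromEdgeSet G hsub]
    have hpow : p ^ (F.card - E.card) * p ^ (E.card - 1) = p ^ (eCount G - 1) := by
      rw [← pow_add, hcard]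
      congr 1
      omega
    rw [div_eq_div_iff (mul_ne_zero hNe (pow_ne_zero _ hpne))
      (mul_ne_zero hNe (pow_ne_zero _ hpne))]
    calc ε ^ E.card * kdens E U * p ^ (F.card - E.card) * ((eCount G : ℝ) * p ^ (E.card - 1))
        = ε ^ E.card * kdens E U * (eCount G : ℝ)
          * (p ^ (F.card - E.card) * p ^ (E.card - 1)) := by ring
      _ = ε ^ E.card * kdens E U * ((eCount G : ℝ) * p ^ (eCount G - 1)) := by
          rw [hpow]; ring
  rw [Finset.sum_congr rfl hmain]
  ring



open Classical in
/-- `(H₁,H₂)` is `(p₁,p₂)`-common if and only if, for every kernel `U` with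
`-p₁ ≤ U ≤ p₂` pointwise, the expansion expression
`∑_{E⊆E(H₁),|E|≥2} t(H₁[E],U)/(e(H₁)p₁^{|E|-1})
 + ∑_{E⊆E(H₂),|E|≥2} (-1)^{|E|} t(H₂[E],U)/(e(H₂)p₂^{|E|-1})` is non-negative. -/
theorem commonPair_iff_expansion {V₁ V₂ : Type*} [Fintype V₁] [Fintype V₂]
    (G₁ : SimpleGraph V₁) (G₂ : SimpleGraph V₂)
    (h₁ : 1 ≤ eCount G₁) (h₂ : 1 ≤ eCount G₂)
    (p₁ p₂ : ℝ) (hp₁ : p₁ ∈ Set.Ioo (0:ℝ) 1) (hp₂ : p₂ ∈ Set.Ioo (0:ℝ) 1)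
    (hsum : p₁ + p₂ = 1) :
    IsCommonPair G₁ G₂ p₁ p₂ ↔
      ∀ U : ℝ → ℝ → ℝ, IsKernel U → (∀ x y, -p₁ ≤ U x y ∧ U x y ≤ p₂) →
        0 ≤ (∑ E ∈ G₁.edgeFinset.powerset.filter (fun E => 2 ≤ E.card),
              homDensity (SimpleGraph.fromEdgeSet (E : Set (Sym2 V₁))) U
                / (eCount G₁ * p₁ ^ (E.card - 1)))
          + ∑ E ∈ G₂.edgeFinset.powerset.filter (fun E => 2 ≤ E.card),
              (-1 : ℝ) ^ E.card *
                homDensity (SimpleGraph.fromEdgeSet (E : Set (Sym2 V₂))) U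
                  / (eCount G₂ * p₂ ^ (E.card - 1)) := by
  obtain ⟨hp1pos, hp1lt⟩ := hp₁
  obtain ⟨hp2pos, hp2lt⟩ := hp₂
  have hS1 : ∀ U : ℝ → ℝ → ℝ,
      (∑ E ∈ G₁.edgeFinset.powerset.filter (fun E => 2 ≤ E.card),
          (1 : ℝ) ^ E.card * homDensity (SimpleGraph.fromEdgeSet (E : Set (Sym2 V₁))) U
            / (eCount G₁ * p₁ ^ (E.card - 1)))
        = ∑ E ∈ G₁.edgeFinset.powerset.filter (fun E => 2 ≤ E.card),
            homDensity (SimpleGraph.fromEdgeSet (E : Set (Sym2 V₁))) U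
              / (eCount G₁ * p₁ ^ (E.card - 1)) := fun U =>
    Finset.sum_congr rfl fun E _ => by rw [one_pow, one_mul]
  constructor
  · intro hcommon U hK hbd
    obtain ⟨hU, hsymm, C, hC⟩ := hK
    have hG1 : IsGraphon (fun a b => p₁ + 1 * U a b) := by
      refine ⟨?_, ?_, ?_⟩
      · have : (Function.uncurry fun a b => p₁ + 1 * U a b)
            = fun q : ℝ × ℝ => p₁ + 1 * Function.uncurry U q := rfl
        rw [this]
        exact measurable_const.add (hU.const_mul 1)
      · intro x y; simp only [hsymm x y]
      · intro x y
        obtain ⟨hb1, hb2⟩ := hbd x y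
        constructor
        · simp only [one_mul]; linarith
        · simp only [one_mul]; linarith
    have hG2 : IsGraphon (fun a b => p₂ + (-1) * U a b) := by
      refine ⟨?_, ?_, ?_⟩
      · have : (Function.uncurry fun a b => p₂ + (-1) * U a b)
            = fun q : ℝ × ℝ => p₂ + (-1) * Function.uncurry U q := rfl
        rw [this]
        exact measurable_const.add (hU.const_mul (-1))
      · intro x y; simp only [hsymm x y]
      · intro x y
        obtain ⟨hb1, hb2⟩ := hbd x y
        constructor
        · simp only [neg_mul, one_mul]; linarith
        · simp only [neg_mul, one_mul]; linarith
    have hsum1 : ∀ x y, (fun a b => p₁ + 1 * U a b) x y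
        + (fun a b => p₂ + (-1) * U a b) x y = 1 := fun x y => by
      simp only [one_mul, neg_mul]; linarith
    have hineq := hcommon _ _ hG1 hG2 hsum1
    rw [single_expansion G₁ h₁ ⟨hU, hsymm, C, hC⟩ hp1pos (Or.inl rfl),
        single_expansion G₂ h₂ ⟨hU, hsymm, C, hC⟩ hp2pos (Or.inr rfl)] at hineq
    rw [hS1 U] at hineq
    linarith
  · intro hexp W₁ W₂ hG1 hG2 hsum1
    obtain ⟨hW1m, hW1s, hW1r⟩ := hG1
    have hK : IsKernel (fun a b => W₁ a b - p₁) := by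
      refine ⟨?_, ?_, 1, ?_⟩
      · have : (Function.uncurry fun a b => W₁ a b - p₁)
            = fun q : ℝ × ℝ => Function.uncurry W₁ q - p₁ := rfl
        rw [this]
        exact hW1m.sub measurable_const
      · intro x y; simp only [hW1s x y]
      · intro x y
        obtain ⟨hr1, hr2⟩ := hW1r x y
        rw [abs_le]
        constructor <;> simp only <;> linarith
    have hbd : ∀ x y, -p₁ ≤ W₁ x y - p₁ ∧ W₁ x y - p₁ ≤ p₂ := fun x y => by
      obtain ⟨hr1, hr2⟩ := hW1r x y
      constructor <;> linarith
    have h0 := hexp _ hK hbd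
    have e₁ : W₁ = fun a b => p₁ + 1 * (W₁ a b - p₁) := by
      funext a b; ring
    have e₂ : W₂ = fun a b => p₂ + (-1) * (W₁ a b - p₁) := by
      funext a b
      have := hsum1 a b
      ring_nf
      linarith
    rw [show homDensity G₁ W₁ = homDensity G₁ (fun a b => p₁ + 1 * (W₁ a b - p₁)) by
          rw [← e₁],
        show homDensity G₂ W₂ = homDensity G₂ (fun a b => p₂ + (-1) * (W₁ a b - p₁)) by
          rw [← e₂]]
    rw [single_expansion G₁ h₁ hK hp1pos (Or.inl rfl),
        single_expansion G₂ h₂ hK hp2pos (Or.inr rfl)]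
    rw [hS1 (fun a b => W₁ a b - p₁)] at *
    linarith
end

section
/- Let H₁, H₂, H₃ be graphs and p₁,p₂,p₃ ∈ (0,1) with p₁+p₂+p₃=1. If min{g(H₁), g(H₂), g(H₃)} is odd (and finite), then (H₁,H₂,H₃) is not (p₁,p₂,p₃)-common. -/
open MeasureTheory Finset

instance : IsFiniteMeasure unitM := by constructor; simp [unitM, Real.volume_Icc]

noncomputable def gg : ℝ → ℝ := fun x => if x < 1/2 then 1 else -1

noncomputable def U₀ : ℝ → ℝ → ℝ := fun x y => -(gg x * gg y)

lemma gg_meas : Measurable gg := by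
  unfold gg
  exact Measurable.ite (measurableSet_lt measurable_id measurable_const)
    measurable_const measurable_const

lemma gg_abs (x : ℝ) : |gg x| = 1 := by unfold gg; split_ifs <;> simp

lemma U₀_abs (x y : ℝ) : |U₀ x y| = 1 := by
  rw [U₀, abs_neg, abs_mul, gg_abs, gg_abs, one_mul]

lemma gg_pow (d : ℕ) (x : ℝ) : gg x ^ d = if Even d then 1 else gg x := by
  unfold gg
  split_ifs with h1 h2 h2
  · simp
  · simp
  · exact h2.neg_one_pow
  · exact (Nat.not_even_iff_odd.mp h2).neg_one_pow

lemma integral_gg : ∫ x, gg x ∂unitM = 0 := by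
  have : gg = fun x => 1 - 2 * Set.indicator (Set.Ici (1/2:ℝ)) (fun _ => (1:ℝ)) x := by
    funext x
    unfold gg
    by_cases h : x < 1/2
    · rw [Set.indicator_of_notMem (by simp only [Set.mem_Ici, not_le]; exact h)]
      rw [if_pos h]; ring
    · rw [Set.indicator_of_mem (by simp only [Set.mem_Ici]; exact not_lt.mp h)]
      rw [if_neg h]; ring
  rw [this]
  have hind : Integrable (Set.indicator (Set.Ici (1/2:ℝ)) (fun _ => (1:ℝ))) unitM := by
    apply (integrable_const (1:ℝ)).indicator measurableSet_Ici
  rw [integral_sub (integrable_const 1) (hind.const_mul 2), integral_const,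
    integral_const_mul, integral_indicator measurableSet_Ici]
  have h1 : unitM Set.univ = 1 := by simp [unitM, Real.volume_Icc]
  have h2 : ∫ x in Set.Ici (1/2:ℝ), (1:ℝ) ∂unitM = 1/2 := by
    rw [setIntegral_const]
    have : unitM (Set.Ici (1/2:ℝ)) = ENNReal.ofReal (1/2) := by
      rw [unitM, Measure.restrict_apply measurableSet_Ici]
      have : Set.Ici (1/2:ℝ) ∩ Set.Icc 0 1 = Set.Icc (1/2) 1 := by
        ext x; simp only [Set.mem_inter_iff, Set.mem_Ici, Set.mem_Icc]
        constructor
        · rintro ⟨h1, h2, h3⟩; exact ⟨h1, h3⟩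
        · rintro ⟨h1, h2⟩; exact ⟨h1, by linarith, h2⟩
      rw [this, Real.volume_Icc]; norm_num
    rw [measureReal_def, this]; simp [ENNReal.toReal_ofReal]
  rw [measureReal_def, h1, h2]; simp

lemma integral_gg_pow (d : ℕ) : ∫ x, gg x ^ d ∂unitM = if Even d then 1 else 0 := by
  have : (fun x => gg x ^ d) = if Even d then (fun _ => (1:ℝ)) else gg := by
    funext x; rw [gg_pow]; split_ifs <;> rfl
  rw [this]
  split_ifs
  · rw [integral_const]; simp [unitM, Real.volume_Icc]
  · exact integral_gg

lemma my_integral_pi {V : Type*} [Fintype V] (f : V → ℝ → ℝ) :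
    ∫ x : V → ℝ, ∏ i, f i (x i) ∂(Measure.pi fun _ => unitM) = ∏ i, ∫ x, f i x ∂unitM := by
  letI : MeasureSpace ℝ := ⟨unitM⟩
  haveI : SigmaFinite (volume : Measure ℝ) := (inferInstance : SigmaFinite unitM)
  exact MeasureTheory.integral_fintype_prod_eq_prod (μ := fun _ => unitM) f

open Classical in
/-- Number of edges of `t` incident to `v`. -/
noncomputable def dS {V : Type*} (t : Finset (Sym2 V)) (v : V) : ℕ :=
  (t.filter (fun e => v ∈ e)).card

lemma integrable_prod_gg {V : Type*} [Fintype V] (d : V → ℕ) :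
    Integrable (fun x : V → ℝ => ∏ v, gg (x v) ^ d v) (Measure.pi fun _ => unitM) := by
  have hm : Measurable fun x : V → ℝ => ∏ v, gg (x v) ^ d v :=
    Finset.measurable_prod _ (fun v _ => ((gg_meas.comp (measurable_pi_apply v)).pow_const _))
  refine (integrable_const (1:ℝ)).mono' hm.aestronglyMeasurable (Filter.Eventually.of_forall ?_)
  intro x
  rw [Real.norm_eq_abs, Finset.abs_prod]
  have : ∀ v ∈ Finset.univ, |gg (x v) ^ d v| = 1 := by
    intro v _; rw [abs_pow, gg_abs, one_pow]
  rw [Finset.prod_congr rfl this, Finset.prod_const_one]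

lemma integral_prod_gg {V : Type*} [Fintype V] (d : V → ℕ) :
    ∫ x : V → ℝ, ∏ v, gg (x v) ^ d v ∂(Measure.pi fun _ => unitM)
      = if (∀ v, Even (d v)) then 1 else 0 := by
  rw [my_integral_pi (fun v y => gg y ^ d v)]
  have : ∀ v ∈ Finset.univ, (∫ y, gg y ^ d v ∂unitM) = if Even (d v) then 1 else 0 :=
    fun v _ => integral_gg_pow (d v)
  rw [Finset.prod_congr rfl this]
  by_cases h : ∀ v : V, Even (d v)
  · rw [if_pos h]
    exact Finset.prod_eq_one (fun v _ => if_pos (h v))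
  · rw [if_neg h]
    obtain ⟨v, hv⟩ := not_forall.mp h
    exact Finset.prod_eq_zero (Finset.mem_univ v) (if_neg hv)

lemma symEdge_U₀ {α : Type*} (x : α → ℝ) (u v : α) :
    symEdge U₀ x s(u, v) = -(gg (x u) * gg (x v)) := by
  simp only [symEdge, Sym2.lift_mk, U₀]; ring

lemma symEdge_add {α : Type*} (p ε : ℝ) (U : ℝ → ℝ → ℝ) (x : α → ℝ) (e : Sym2 α) :
    symEdge (fun a b => p + ε * U a b) x e = ε * symEdge U x e + p := by
  induction e using Sym2.ind with
  | _ u v => simp only [symEdge, Sym2.lift_mk]; ring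

open Classical in
lemma prod_symEdge_U₀ {V : Type*} [Fintype V] (t : Finset (Sym2 V))
    (ht : ∀ e ∈ t, ¬ e.IsDiag) (x : V → ℝ) :
    ∏ e ∈ t, symEdge U₀ x e = (-1)^t.card * ∏ v : V, gg (x v) ^ dS t v := by
  classical
  induction t using Finset.induction_on with
  | empty => simp [dS]
  | @insert e t hnot ih =>
    obtain ⟨⟨u, w⟩, rfl⟩ := e.exists_rep
    have huw : u ≠ w := by
      have := ht _ (Finset.mem_insert_self _ _)
      simpa [Sym2.mk_isDiag_iff] using this
    have ih' := ih (fun e he => ht e (Finset.mem_insert_of_mem he))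
    rw [Finset.prod_insert hnot, ih', Finset.card_insert_of_notMem hnot]
    have hd : ∀ v, dS (insert s(u, w) t) v = dS t v + (if v ∈ s(u, w) then 1 else 0) := by
      intro v
      unfold dS
      rw [Finset.filter_insert]
      split_ifs with h
      · rw [Finset.card_insert_of_notMem (fun hc => hnot (Finset.mem_filter.mp hc).1)]
      · simp
    have hprod : ∏ v : V, gg (x v) ^ dS (insert s(u, w) t) v
        = (gg (x u) * gg (x w)) * ∏ v : V, gg (x v) ^ dS t v := by
      simp_rw [hd, pow_add]
      rw [Finset.prod_mul_distrib]
      have : ∏ v : V, gg (x v) ^ (if v ∈ s(u, w) then 1 else 0)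
          = gg (x u) * gg (x w) := by
        have h1 : ∀ v : V, gg (x v) ^ (if v ∈ s(u, w) then 1 else 0)
            = (if v ∈ s(u, w) then gg (x v) else 1) := by
          intro v; split_ifs <;> simp
        have h2 : ∀ v : V, (if v ∈ s(u, w) then gg (x v) else 1)
            = (if v ∈ ({u, w} : Finset V) then gg (x v) else 1) := by
          intro v
          refine if_congr ?_ rfl rfl
          simp [Sym2.mem_iff]
        simp_rw [h1, h2]
        rw [Finset.prod_ite_mem, Finset.univ_inter]
        rw [Finset.prod_pair huw]
      rw [this]; ring
    rw [hprod, symEdge_U₀]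
    ring

open Classical in
lemma eCount_eq {V : Type*} [Fintype V] (G : SimpleGraph V) :
    eCount G = G.edgeFinset.card := by
  rw [eCount, SimpleGraph.edgeFinset, Set.ncard_eq_toFinset_card']

open Classical in
lemma expansion {V : Type*} [Fintype V] (G : SimpleGraph V) (p ε : ℝ) :
    homDensity G (fun x y => p + ε * U₀ x y)
      = ∑ t ∈ G.edgeFinset.powerset, (-ε)^t.card * p^(G.edgeFinset.card - t.card) *
          (if ∀ v, Even (dS t v) then 1 else 0) := by
  classical
  have hpt : ∀ x : V → ℝ, ∏ e ∈ G.edgeFinset, symEdge (fun a b => p + ε * U₀ a b) x e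
      = ∑ t ∈ G.edgeFinset.powerset,
          ((-ε)^t.card * p^(G.edgeFinset.card - t.card)) * ∏ v, gg (x v) ^ dS t v := by
    intro x
    have h1 : ∀ e ∈ G.edgeFinset, symEdge (fun a b => p + ε * U₀ a b) x e
        = ε * symEdge U₀ x e + p := fun e _ => symEdge_add p ε U₀ x e
    rw [Finset.prod_congr rfl h1, Finset.prod_add]
    refine Finset.sum_congr rfl fun t ht => ?_
    rw [Finset.mem_powerset] at ht
    have hdiag : ∀ e ∈ t, ¬ e.IsDiag := fun e he =>
      G.not_isDiag_of_mem_edgeSet (SimpleGraph.mem_edgeFinset.mp (ht he))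
    have h2 : ∏ e ∈ t, (ε * symEdge U₀ x e) = ε ^ t.card * ∏ e ∈ t, symEdge U₀ x e := by
      rw [Finset.prod_mul_distrib, Finset.prod_const]
    rw [h2, prod_symEdge_U₀ t hdiag x, Finset.prod_const, Finset.card_sdiff_of_subset ht]
    rw [neg_pow ε]
    ring
  unfold homDensity
  rw [integral_congr_ae (Filter.Eventually.of_forall hpt)]
  rw [integral_finset_sum _ (fun t _ => ((integrable_prod_gg (dS t)).const_mul _))]
  refine Finset.sum_congr rfl fun t ht => ?_
  rw [integral_const_mul, integral_prod_gg]

open Classical in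
/-- Nonempty subsets of the edge set in which every vertex has even degree. -/
noncomputable def evens {V : Type*} [Fintype V] (G : SimpleGraph V) : Finset (Finset (Sym2 V)) :=
  (G.edgeFinset.powerset.filter (fun t => ∀ v, Even (dS t v))).erase ∅

open Classical in
lemma homDensity_eq {V : Type*} [Fintype V] (G : SimpleGraph V) (p ε : ℝ) :
    homDensity G (fun x y => p + ε * U₀ x y)
      = p ^ G.edgeFinset.card
        + ∑ t ∈ evens G, (-ε)^t.card * p^(G.edgeFinset.card - t.card) := by
  classical
  rw [expansion]
  simp_rw [mul_ite, mul_one, mul_zero]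
  rw [← Finset.sum_filter]
  have hempty : ∅ ∈ G.edgeFinset.powerset.filter (fun t => ∀ v : V, Even (dS t v)) := by
    rw [Finset.mem_filter]
    refine ⟨Finset.empty_mem_powerset _, fun v => ?_⟩
    simp [dS]
  rw [← Finset.insert_erase hempty, Finset.sum_insert (Finset.notMem_erase _ _)]
  simp only [Finset.card_empty, pow_zero, one_mul, Nat.sub_zero, evens]

open Classical in
lemma evens_subset_powerset {V : Type*} [Fintype V] (G : SimpleGraph V) :
    evens G ⊆ G.edgeFinset.powerset := by
  classical
  exact (Finset.erase_subset _ _).trans (Finset.filter_subset _ _)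

open Classical in
lemma mem_evens {V : Type*} [Fintype V] {G : SimpleGraph V} {t : Finset (Sym2 V)}
    (ht : t ∈ evens G) : t ⊆ G.edgeFinset ∧ t.Nonempty ∧ ∀ v, Even (dS t v) := by
  classical
  rw [evens, Finset.mem_erase, Finset.mem_filter, Finset.mem_powerset] at ht
  exact ⟨ht.2.1, Finset.nonempty_iff_ne_empty.mpr ht.1, ht.2.2⟩

open SimpleGraph Walk in
open Classical in
lemma evens_card_ge {V : Type*} [Fintype V] {G : SimpleGraph V} {k : ℕ}
    (hk : (k : ℕ∞) ≤ G.egirth) (t : Finset (Sym2 V)) (htG : t ⊆ G.edgeFinset)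
    (htne : t.Nonempty) (hev : ∀ v, Even (dS t v)) : k ≤ t.card := by
  classical
  suffices h : ∃ (a : V) (c : G.Walk a a), c.IsCycle ∧ ∀ e ∈ c.edges, e ∈ t by
    obtain ⟨a, c, hc, hct⟩ := h
    have h1 : (k : ℕ∞) ≤ c.length := le_trans hk (le_egirth.mp le_rfl a c hc)
    have h2 : c.length ≤ t.card := by
      have hnodup := hc.isCircuit.isTrail.edges_nodup
      calc c.length = c.edges.length := (c.length_edges).symm
        _ = c.edges.toFinset.card := (List.toFinset_card_of_nodup hnodup).symm
        _ ≤ t.card := Finset.card_le_card (fun e he => hct e (List.mem_toFinset.mp he))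
    exact le_trans (by exact_mod_cast h1) h2
  obtain ⟨e₀, he₀⟩ := htne
  obtain ⟨⟨a₀, b₀⟩, rfl⟩ := e₀.exists_rep
  have hadj₀ : G.Adj a₀ b₀ := (SimpleGraph.mem_edgeSet G).mp (SimpleGraph.mem_edgeFinset.mp (htG he₀))
  haveI : Nonempty V := ⟨a₀⟩
  set P : ℕ → Prop := fun n => ∃ (b a : V) (q : G.Walk b a), q.IsPath ∧
    (∀ e ∈ q.edges, e ∈ t) ∧ q.length = n with hP
  have hP1 : P 1 := by
    refine ⟨a₀, b₀, Walk.cons hadj₀ Walk.nil, ?_, ?_, by simp⟩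
    · exact (Walk.cons_isPath_iff _ _).mpr ⟨Walk.IsPath.nil, by simp [hadj₀.ne]⟩
    · intro e he
      simp only [Walk.edges_cons, Walk.edges_nil, List.mem_singleton] at he
      subst he; exact he₀
  have hcard1 : 1 ≤ Fintype.card V := Fintype.card_pos
  have hPn₀ : P (Nat.findGreatest P (Fintype.card V)) := Nat.findGreatest_spec hcard1 hP1
  set n₀ := Nat.findGreatest P (Fintype.card V) with hn₀
  obtain ⟨b, a, q, hq, hqt, hqlen⟩ := hPn₀
  have hmax : ∀ (b' a' : V) (r : G.Walk b' a'), r.IsPath → (∀ e ∈ r.edges, e ∈ t) →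
      r.length ≤ n₀ := fun b' a' r hr hrt =>
    Nat.le_findGreatest (le_of_lt hr.length_lt) ⟨b', a', r, hr, hrt, rfl⟩
  have hn₀1 : 1 ≤ n₀ := Nat.le_findGreatest hcard1 hP1
  have hba : b ≠ a := by
    intro h
    subst h
    cases q with
    | nil => rw [Walk.length_nil] at hqlen; omega
    | cons h' p =>
      have := hq.support_nodup
      rw [Walk.support_cons, List.nodup_cons] at this
      exact this.1 (Walk.end_mem_support p)
  have hodd : ¬ Even (q.edges.countP (fun e => b ∈ e)) := by
    rw [hq.isTrail.even_countP_edges_iff b]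
    intro hcon
    exact (hcon hba).1 rfl
  obtain ⟨f, hft, hbf, hfq⟩ : ∃ f ∈ t, b ∈ f ∧ f ∉ q.edges := by
    by_contra hcon
    push_neg at hcon
    have heq : t.filter (fun e => b ∈ e) = q.edges.toFinset.filter (fun e => b ∈ e) := by
      ext e
      simp only [Finset.mem_filter, List.mem_toFinset]
      constructor
      · rintro ⟨h1, h2⟩; exact ⟨hcon e h1 h2, h2⟩
      · rintro ⟨h1, h2⟩; exact ⟨hqt e h1, h2⟩
    have hcount : q.edges.countP (fun e => b ∈ e)
        = (q.edges.toFinset.filter (fun e => b ∈ e)).card := by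
      rw [List.countP_eq_length_filter]
      rw [← List.toFinset_card_of_nodup (hq.isTrail.edges_nodup.filter _)]
      congr 1
      rw [List.toFinset_filter]
      simp
    apply hodd
    rw [hcount, ← heq]
    exact hev b
  obtain ⟨w, rfl⟩ := Sym2.mem_iff_exists.mp hbf
  have hadj : G.Adj b w := (SimpleGraph.mem_edgeSet G).mp (SimpleGraph.mem_edgeFinset.mp (htG hft))
  by_cases hw : w ∈ q.support
  · refine ⟨w, Walk.cons hadj.symm (q.takeUntil w hw), ?_, ?_⟩
    · rw [Walk.cons_isCycle_iff]
      refine ⟨hq.takeUntil hw, fun hc => hfq ?_⟩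
      have := Walk.edges_takeUntil_subset q hw hc
      rwa [Sym2.eq_swap] at this
    · intro e he
      rw [Walk.edges_cons] at he
      rcases List.mem_cons.mp he with he | he
      · subst he; rwa [Sym2.eq_swap]
      · exact hqt e (Walk.edges_takeUntil_subset q hw he)
  · exfalso
    have hpath : (Walk.cons hadj.symm q).IsPath := (Walk.cons_isPath_iff _ _).mpr ⟨hq, hw⟩
    have hsub : ∀ e ∈ (Walk.cons hadj.symm q).edges, e ∈ t := by
      intro e he
      rw [Walk.edges_cons] at he
      rcases List.mem_cons.mp he with he | he
      · subst he; rwa [Sym2.eq_swap]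
      · exact hqt e he
    have := hmax _ _ _ hpath hsub
    rw [Walk.length_cons, hqlen] at this
    omega

open Classical in
lemma exists_even_card_eq {V : Type*} [Fintype V] {G : SimpleGraph V} {k : ℕ}
    (hgir : G.egirth = (k : ℕ∞)) :
    ∃ t : Finset (Sym2 V), t ⊆ G.edgeFinset ∧ t.Nonempty ∧ (∀ v, Even (dS t v)) ∧ t.card = k := by
  classical
  have hk3 : 3 ≤ k := by
    have := G.three_le_egirth
    rw [hgir] at this
    exact_mod_cast this
  have hac : ¬ G.IsAcyclic := by
    intro h
    rw [h.egirth_eq_top] at hgir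
    simp at hgir
  obtain ⟨a, c, hc, hlen⟩ := SimpleGraph.exists_egirth_eq_length.mpr hac
  rw [hgir] at hlen
  have hlenk : c.length = k := by exact_mod_cast hlen.symm
  have hnodup := hc.isCircuit.isTrail.edges_nodup
  have hcard : c.edges.toFinset.card = k := by
    rw [List.toFinset_card_of_nodup hnodup, c.length_edges, hlenk]
  refine ⟨c.edges.toFinset, ?_, ?_, ?_, hcard⟩
  · intro e he
    rw [SimpleGraph.mem_edgeFinset]
    exact c.edges_subset_edgeSet (List.mem_toFinset.mp he)
  · rw [← Finset.card_pos, hcard]; omega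
  · intro v
    have hev : Even (c.edges.countP (fun e => v ∈ e)) :=
      (hc.isCircuit.isTrail.even_countP_edges_iff v).mpr (fun h => absurd rfl h)
    have hcount : c.edges.countP (fun e => v ∈ e)
        = (c.edges.toFinset.filter (fun e => v ∈ e)).card := by
      rw [List.countP_eq_length_filter]
      rw [← List.toFinset_card_of_nodup (hnodup.filter _)]
      congr 1
      rw [List.toFinset_filter]
      simp
    unfold dS
    rw [← hcount]
    convert hev using 2

open Classical in
lemma evens_min_card {V : Type*} [Fintype V] {G : SimpleGraph V} {k : ℕ}
    (hk : (k : ℕ∞) ≤ G.egirth) : ∀ t ∈ evens G, k ≤ t.card := by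
  intro t ht
  obtain ⟨h1, h2, h3⟩ := mem_evens ht
  exact evens_card_ge hk t h1 h2 h3

open Classical in
/-- The coefficient of the leading term. -/
noncomputable def aG {V : Type*} [Fintype V] (G : SimpleGraph V) (p : ℝ) (k : ℕ) : ℝ :=
  (((evens G).filter (fun t => t.card = k)).card : ℝ) * p^(eCount G - k)
    / (eCount G * p ^ (eCount G - 1))

noncomputable def KG {V : Type*} [Fintype V] (G : SimpleGraph V) (p : ℝ) : ℝ :=
  2^(eCount G) / (eCount G * p ^ (eCount G - 1))

lemma aG_nonneg {V : Type*} [Fintype V] (G : SimpleGraph V) {p : ℝ} (hp : 0 < p) (k : ℕ) :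
    0 ≤ aG G p k := by
  rw [aG]; positivity

lemma KG_nonneg {V : Type*} [Fintype V] (G : SimpleGraph V) {p : ℝ} (hp : 0 < p) :
    0 ≤ KG G p := by
  rw [KG]; positivity

open Classical in
lemma aG_pos {V : Type*} [Fintype V] {G : SimpleGraph V} {p : ℝ} (hp : 0 < p) {k : ℕ}
    (hgir : G.egirth = (k : ℕ∞)) : 0 < aG G p k := by
  obtain ⟨t, htG, htne, htev, htk⟩ := exists_even_card_eq hgir
  have htevens : t ∈ evens G := by
    rw [evens, Finset.mem_erase, Finset.mem_filter, Finset.mem_powerset]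
    exact ⟨Finset.nonempty_iff_ne_empty.mp htne, htG, htev⟩
  have hN : 0 < ((evens G).filter (fun t => t.card = k)).card :=
    Finset.card_pos.mpr ⟨t, Finset.mem_filter.mpr ⟨htevens, htk⟩⟩
  have he1 : 0 < eCount G := by
    rw [eCount_eq]
    obtain ⟨e, he⟩ := htne
    exact Finset.card_pos.mpr ⟨e, htG he⟩
  rw [aG]
  have h1 : (0:ℝ) < (((evens G).filter (fun t => t.card = k)).card : ℝ) := by exact_mod_cast hN
  have h2 : (0:ℝ) < (eCount G : ℝ) := by exact_mod_cast he1
  positivity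

open Classical in
lemma graph_bound {V : Type*} [Fintype V] (G : SimpleGraph V) {p ε β : ℝ} {k : ℕ}
    (hodd : Odd k) (hp : 0 < p) (hp1 : p ≤ 1) (hε : |ε| ≤ 1) (hβ : |ε|^(k+1) ≤ β)
    (hmin : ∀ t ∈ evens G, k ≤ t.card) :
    homDensity G (fun x y => p + ε * U₀ x y) / (eCount G * p ^ (eCount G - 1)) - p / eCount G
      ≤ -(ε^k) * aG G p k + β * KG G p := by
  classical
  rw [aG, KG, eCount_eq]
  by_cases he : G.edgeFinset.card = 0
  · rw [he]
    simp
  · have he1 : 1 ≤ G.edgeFinset.card := Nat.one_le_iff_ne_zero.mpr he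
    rw [homDensity_eq]
    set m := G.edgeFinset.card with hm
    have hm0 : (0:ℝ) < (m:ℝ) := by exact_mod_cast Nat.lt_of_lt_of_le Nat.zero_lt_one he1
    have hD : (0:ℝ) < (m:ℝ) * p ^ (m - 1) := mul_pos hm0 (pow_pos hp _)
    have hps : p ^ m = p * p^(m-1) := by
      nth_rewrite 1 [show m = (m-1)+1 from (Nat.succ_pred_eq_of_pos he1).symm]
      rw [pow_succ]; ring
    have hpe : p ^ m / ((m:ℝ) * p^(m-1)) = p / (m:ℝ) := by
      rw [div_eq_div_iff hD.ne' hm0.ne', hps]; ring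
    rw [add_div, hpe, add_sub_cancel_left]
    rw [← Finset.sum_filter_add_sum_filter_not (evens G) (fun t => t.card = k)]
    have hS1 : ∑ t ∈ (evens G).filter (fun t => t.card = k),
        (-ε)^t.card * p^(m - t.card)
        = (((evens G).filter (fun t => t.card = k)).card : ℝ) * (-(ε^k) * p^(m-k)) := by
      rw [Finset.sum_congr rfl (fun t ht => ?_), Finset.sum_const, nsmul_eq_mul]
      rw [(Finset.mem_filter.mp ht).2, hodd.neg_pow]
    have hβ0 : 0 ≤ β := le_trans (by positivity) hβ
    have hS2 : ∑ t ∈ (evens G).filter (fun t => ¬ t.card = k),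
        (-ε)^t.card * p^(m - t.card) ≤ (2^m : ℝ) * β := by
      calc ∑ t ∈ (evens G).filter (fun t => ¬ t.card = k), (-ε)^t.card * p^(m - t.card)
          ≤ ∑ _t ∈ (evens G).filter (fun t => ¬ t.card = k), β := by
            refine Finset.sum_le_sum (fun t ht => ?_)
            obtain ⟨htev, htk⟩ := Finset.mem_filter.mp ht
            have hk1 : k + 1 ≤ t.card := Nat.lt_of_le_of_ne (hmin t htev) (Ne.symm htk)
            calc (-ε)^t.card * p^(m - t.card) ≤ |(-ε)^t.card * p^(m - t.card)| := le_abs_self _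
              _ = |ε|^t.card * p^(m - t.card) := by
                  rw [abs_mul, abs_pow, abs_neg, abs_of_pos (pow_pos hp _)]
              _ ≤ |ε|^(k+1) * 1 :=
                  mul_le_mul (pow_le_pow_of_le_one (abs_nonneg ε) hε hk1)
                    (pow_le_one₀ hp.le hp1) (by positivity) (by positivity)
              _ ≤ β := by rw [mul_one]; exact hβ
          _ ≤ (2^m : ℝ) * β := by
            rw [Finset.sum_const, nsmul_eq_mul]
            refine mul_le_mul_of_nonneg_right ?_ hβ0
            have hc : ((evens G).filter (fun t => ¬ t.card = k)).card ≤ 2^m := by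
              calc ((evens G).filter (fun t => ¬ t.card = k)).card
                  ≤ (evens G).card := Finset.card_le_card (Finset.filter_subset _ _)
                _ ≤ G.edgeFinset.powerset.card := Finset.card_le_card (evens_subset_powerset G)
                _ = 2^m := by rw [Finset.card_powerset]
            exact_mod_cast hc
    have hsum : ∑ t ∈ (evens G).filter (fun t => t.card = k), (-ε)^t.card * p^(m - t.card)
        + ∑ t ∈ (evens G).filter (fun t => ¬ t.card = k), (-ε)^t.card * p^(m - t.card)
        ≤ (((evens G).filter (fun t => t.card = k)).card : ℝ) * (-(ε^k) * p^(m-k))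
          + (2^m : ℝ) * β := by
      rw [hS1]
      exact add_le_add_right hS2 _
    calc _ ≤ ((((evens G).filter (fun t => t.card = k)).card : ℝ) * (-(ε^k) * p^(m-k))
          + (2^m : ℝ) * β) / ((m:ℝ) * p^(m-1)) := by
          exact div_le_div_of_nonneg_right hsum hD.le |>.trans_eq rfl
      _ = -(ε^k) * ((((evens G).filter (fun t => t.card = k)).card : ℝ) * p^(m-k)
            / ((m:ℝ) * p^(m-1))) + β * (2^m / ((m:ℝ) * p^(m-1))) := by ring

/-- `(G₁,G₂,G₃)` is `(p₁,p₂,p₃)`-common. -/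
def IsCommonTriple {V₁ V₂ V₃ : Type*} [Fintype V₁] [Fintype V₂] [Fintype V₃]
    (G₁ : SimpleGraph V₁) (G₂ : SimpleGraph V₂) (G₃ : SimpleGraph V₃)
    (p₁ p₂ p₃ : ℝ) : Prop :=
  ∀ W₁ W₂ W₃ : ℝ → ℝ → ℝ, IsGraphon W₁ → IsGraphon W₂ → IsGraphon W₃ →
    (∀ x y, W₁ x y + W₂ x y + W₃ x y = 1) →
    homDensity G₁ W₁ / (eCount G₁ * p₁ ^ (eCount G₁ - 1))
      + homDensity G₂ W₂ / (eCount G₂ * p₂ ^ (eCount G₂ - 1))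
      + homDensity G₃ W₃ / (eCount G₃ * p₃ ^ (eCount G₃ - 1))
      ≥ p₁ / eCount G₁ + p₂ / eCount G₂ + p₃ / eCount G₃

lemma graphon_aux {p ε : ℝ} (hp : p ∈ Set.Ioo (0:ℝ) 1) (h1 : |ε| ≤ p) (h2 : |ε| ≤ 1 - p) :
    IsGraphon (fun x y => p + ε * U₀ x y) := by
  refine ⟨?_, ?_, ?_⟩
  · have : (Function.uncurry fun x y => p + ε * U₀ x y)
        = fun q : ℝ × ℝ => p + ε * (-(gg q.1 * gg q.2)) := rfl
    rw [this]
    exact measurable_const.add (measurable_const.mul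
      (((gg_meas.comp measurable_fst).mul (gg_meas.comp measurable_snd)).neg))
  · intro x y
    simp only [U₀]
    ring
  · intro x y
    have habs : |ε * U₀ x y| ≤ |ε| := by
      rw [abs_mul, U₀_abs, mul_one]
    have h3 := abs_le.mp habs
    constructor
    · have := h3.1; simp only; linarith
    · have := h3.2; simp only; linarith

set_option maxHeartbeats 1000000 in
open Classical in
lemma main_case {Va Vb Vc : Type*} [Fintype Va] [Fintype Vb] [Fintype Vc]
    (Ga : SimpleGraph Va) (Gb : SimpleGraph Vb) (Gc : SimpleGraph Vc)
    {pa pb pc : ℝ} (hpa : pa ∈ Set.Ioo (0:ℝ) 1) (hpb : pb ∈ Set.Ioo (0:ℝ) 1)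
    (hpc : pc ∈ Set.Ioo (0:ℝ) 1) (hsum : pa + pb + pc = 1)
    {k : ℕ} (hodd : Odd k) (hk3 : 3 ≤ k)
    (hga : (k : ℕ∞) ≤ Ga.egirth) (hgb : (k : ℕ∞) ≤ Gb.egirth) (hgc : (k : ℕ∞) ≤ Gc.egirth)
    (hA : 0 < aG Ga pa k) (hab : aG Gb pb k ≤ aG Ga pa k) (hac : aG Gc pc k ≤ aG Ga pa k) :
    ∃ Wa Wb Wc : ℝ → ℝ → ℝ, IsGraphon Wa ∧ IsGraphon Wb ∧ IsGraphon Wc ∧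
      (∀ x y, Wa x y + Wb x y + Wc x y = 1) ∧
      homDensity Ga Wa / (eCount Ga * pa ^ (eCount Ga - 1))
        + homDensity Gb Wb / (eCount Gb * pb ^ (eCount Gb - 1))
        + homDensity Gc Wc / (eCount Gc * pc ^ (eCount Gc - 1))
        < pa / eCount Ga + pb / eCount Gb + pc / eCount Gc := by
  classical
  set A := aG Ga pa k with hA'
  set M := 2^(k+1) * (KG Ga pa + KG Gb pb + KG Gc pc) with hM'
  have hM : 0 ≤ M := by
    have := KG_nonneg Ga hpa.1
    have := KG_nonneg Gb hpb.1
    have := KG_nonneg Gc hpc.1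
    positivity
  set c : ℝ := min (min (min pa (1-pa)) (min pb (1-pb)))
      (min (min pc (1-pc)) (6 * A / (M+1))) / 2 with hc'
  have hc0 : 0 < c := by
    apply div_pos _ (by norm_num : (0:ℝ) < 2)
    apply lt_min
    · exact lt_min (lt_min hpa.1 (by linarith [hpa.2])) (lt_min hpb.1 (by linarith [hpb.2]))
    · exact lt_min (lt_min hpc.1 (by linarith [hpc.2])) (by positivity)
  have h2ca : 2*c ≤ pa := by
    have : min (min (min pa (1-pa)) (min pb (1-pb)))
        (min (min pc (1-pc)) (6 * A / (M+1))) ≤ pa :=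
      le_trans (min_le_left _ _) (le_trans (min_le_left _ _) (min_le_left _ _))
    rw [hc']; linarith
  have h2ca' : 2*c ≤ 1 - pa := by
    have : min (min (min pa (1-pa)) (min pb (1-pb)))
        (min (min pc (1-pc)) (6 * A / (M+1))) ≤ 1 - pa :=
      le_trans (min_le_left _ _) (le_trans (min_le_left _ _) (min_le_right _ _))
    rw [hc']; linarith
  have h2cb : 2*c ≤ pb := by
    have : min (min (min pa (1-pa)) (min pb (1-pb)))
        (min (min pc (1-pc)) (6 * A / (M+1))) ≤ pb :=
      le_trans (min_le_left _ _) (le_trans (min_le_right _ _) (min_le_left _ _))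
    rw [hc']; linarith
  have h2cb' : 2*c ≤ 1 - pb := by
    have : min (min (min pa (1-pa)) (min pb (1-pb)))
        (min (min pc (1-pc)) (6 * A / (M+1))) ≤ 1 - pb :=
      le_trans (min_le_left _ _) (le_trans (min_le_right _ _) (min_le_right _ _))
    rw [hc']; linarith
  have h2cc : 2*c ≤ pc := by
    have : min (min (min pa (1-pa)) (min pb (1-pb)))
        (min (min pc (1-pc)) (6 * A / (M+1))) ≤ pc :=
      le_trans (min_le_right _ _) (le_trans (min_le_left _ _) (min_le_left _ _))
    rw [hc']; linarith
  have h2cc' : 2*c ≤ 1 - pc := by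
    have : min (min (min pa (1-pa)) (min pb (1-pb)))
        (min (min pc (1-pc)) (6 * A / (M+1))) ≤ 1 - pc :=
      le_trans (min_le_right _ _) (le_trans (min_le_left _ _) (min_le_right _ _))
    rw [hc']; linarith
  have hcM : c * M < 6 * A := by
    have h1 : min (min (min pa (1-pa)) (min pb (1-pb)))
        (min (min pc (1-pc)) (6 * A / (M+1))) ≤ 6 * A / (M+1) :=
      le_trans (min_le_right _ _) (min_le_right _ _)
    have h2 : c ≤ 6 * A / (M+1) / 2 := by rw [hc']; linarith
    rw [div_div] at h2
    have h3 : c * ((M+1)*2) ≤ 6 * A := (le_div_iff₀ (by linarith)).mp h2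
    nlinarith [hc0, hM]
  -- the three graphons
  have habs2c : |2*c| = 2*c := abs_of_pos (by linarith)
  have habsc : |-c| = c := by rw [abs_neg, abs_of_pos hc0]
  have hWa : IsGraphon (fun x y => pa + (2*c) * U₀ x y) :=
    graphon_aux hpa (by rw [habs2c]; linarith) (by rw [habs2c]; linarith)
  have hWb : IsGraphon (fun x y => pb + (-c) * U₀ x y) :=
    graphon_aux hpb (by rw [habsc]; linarith) (by rw [habsc]; linarith)
  have hWc : IsGraphon (fun x y => pc + (-c) * U₀ x y) :=
    graphon_aux hpc (by rw [habsc]; linarith) (by rw [habsc]; linarith)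
  refine ⟨_, _, _, hWa, hWb, hWc, fun x y => by linear_combination hsum, ?_⟩
  -- the three bounds
  have hβb : |(-c)|^(k+1) ≤ (2*c)^(k+1) := by
    rw [habsc]
    exact pow_le_pow_left₀ hc0.le (by linarith) _
  have hBa := graph_bound Ga (p := pa) (ε := 2*c) (β := (2*c)^(k+1)) hodd hpa.1 hpa.2.le
      (by rw [habs2c]; linarith) (le_of_eq (by rw [habs2c])) (evens_min_card hga)
  have hBb := graph_bound Gb (p := pb) (ε := -c) (β := (2*c)^(k+1)) hodd hpb.1 hpb.2.le
      (by rw [habsc]; linarith) hβb (evens_min_card hgb)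
  have hBc := graph_bound Gc (p := pc) (ε := -c) (β := (2*c)^(k+1)) hodd hpc.1 hpc.2.le
      (by rw [habsc]; linarith) hβb (evens_min_card hgc)
  -- combine
  have hneg : -((2*c)^k) * aG Ga pa k + (2*c)^(k+1) * KG Ga pa
      + (-((-c)^k) * aG Gb pb k + (2*c)^(k+1) * KG Gb pb)
      + (-((-c)^k) * aG Gc pc k + (2*c)^(k+1) * KG Gc pc) < 0 := by
    have hck : (-c)^k = -(c^k) := hodd.neg_pow c
    have h2ck : (2*c)^k = 2^k * c^k := mul_pow 2 c k
    have h2ck1 : (2*c)^(k+1) = 2^(k+1) * c * c^k := by rw [mul_pow]; ring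
    have h8 : (8:ℝ) ≤ 2^k := by
      calc (8:ℝ) = 2^3 := by norm_num
        _ ≤ 2^k := pow_le_pow_right₀ one_le_two hk3
    have hck0 : 0 < c^k := pow_pos hc0 k
    have hb0 := aG_nonneg Gb hpb.1 k
    have hc0' := aG_nonneg Gc hpc.1 k
    rw [hck, h2ck, h2ck1]
    have expand : -(2^k * c^k) * aG Ga pa k + 2^(k+1) * c * c^k * KG Ga pa
        + (-(-(c^k)) * aG Gb pb k + 2^(k+1) * c * c^k * KG Gb pb)
        + (-(-(c^k)) * aG Gc pc k + 2^(k+1) * c * c^k * KG Gc pc)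
        = c^k * (-(2^k) * A + aG Gb pb k + aG Gc pc k + c * M) := by
      rw [hM', hA']; ring
    rw [expand]
    apply mul_neg_of_pos_of_neg hck0
    nlinarith [hA, hab, hac, hcM, h8]
  linarith [hBa, hBb, hBc, hneg]

/-- If the minimum girth of `H₁, H₂, H₃` is odd (and finite), then `(H₁,H₂,H₃)`
is not `(p₁,p₂,p₃)`-common for any `p₁,p₂,p₃ ∈ (0,1)` with `p₁+p₂+p₃=1`. -/
theorem oddGirth_triple_not_common {V₁ V₂ V₃ : Type*}
    [Fintype V₁] [Fintype V₂] [Fintype V₃]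
    (G₁ : SimpleGraph V₁) (G₂ : SimpleGraph V₂) (G₃ : SimpleGraph V₃)
    (p₁ p₂ p₃ : ℝ) (hp₁ : p₁ ∈ Set.Ioo (0:ℝ) 1) (hp₂ : p₂ ∈ Set.Ioo (0:ℝ) 1)
    (hp₃ : p₃ ∈ Set.Ioo (0:ℝ) 1) (hsum : p₁ + p₂ + p₃ = 1)
    (k : ℕ) (hodd : Odd k)
    (hg : min (min G₁.egirth G₂.egirth) G₃.egirth = (k : ℕ∞)) :
    ¬ IsCommonTriple G₁ G₂ G₃ p₁ p₂ p₃ := by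
  intro hcommon
  classical
  have h3 : (3:ℕ∞) ≤ (k:ℕ∞) := by
    rw [← hg]
    exact le_min (le_min G₁.three_le_egirth G₂.three_le_egirth) G₃.three_le_egirth
  have hk3 : 3 ≤ k := by exact_mod_cast h3
  have hle₁ : (k:ℕ∞) ≤ G₁.egirth := by
    have h := (min_le_left (min G₁.egirth G₂.egirth) G₃.egirth).trans'
      (le_of_eq hg.symm)
    exact h.trans (min_le_left _ _)
  have hle₂ : (k:ℕ∞) ≤ G₂.egirth := by
    have h := (min_le_left (min G₁.egirth G₂.egirth) G₃.egirth).trans'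
      (le_of_eq hg.symm)
    exact h.trans (min_le_right _ _)
  have hle₃ : (k:ℕ∞) ≤ G₃.egirth := by
    exact (min_le_right (min G₁.egirth G₂.egirth) G₃.egirth).trans' (le_of_eq hg.symm)
  have hattain : G₁.egirth = (k:ℕ∞) ∨ G₂.egirth = (k:ℕ∞) ∨ G₃.egirth = (k:ℕ∞) := by
    rcases min_eq_iff.mp hg with ⟨h, _⟩ | ⟨h, _⟩
    · rcases min_eq_iff.mp h with ⟨h', _⟩ | ⟨h', _⟩
      · exact Or.inl h'
      · exact Or.inr (Or.inl h')
    · exact Or.inr (Or.inr h)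
  set a₁ := aG G₁ p₁ k with ha₁
  set a₂ := aG G₂ p₂ k with ha₂
  set a₃ := aG G₃ p₃ k with ha₃
  have hA : 0 < max (max a₁ a₂) a₃ := by
    rcases hattain with h | h | h
    · exact lt_of_lt_of_le (aG_pos hp₁.1 h) ((le_max_left _ _).trans (le_max_left _ _))
    · exact lt_of_lt_of_le (aG_pos hp₂.1 h) ((le_max_right _ _).trans (le_max_left _ _))
    · exact lt_of_lt_of_le (aG_pos hp₃.1 h) (le_max_right _ _)
  rcases le_total a₁ a₂ with h12 | h12
  · rcases le_total a₂ a₃ with h23 | h23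
    · -- a₃ is the max
      have htop : 0 < a₃ := lt_of_lt_of_le hA (max_le (max_le (h12.trans h23) h23) le_rfl)
      obtain ⟨Wa, Wb, Wc, hGa, hGb, hGc, hsum', hlt⟩ :=
        main_case G₃ G₁ G₂ hp₃ hp₁ hp₂ (by linarith) hodd hk3 hle₃ hle₁ hle₂
          htop (h12.trans h23) h23
      have := hcommon Wb Wc Wa hGb hGc hGa (fun x y => by linarith [hsum' x y])
      linarith [hlt, this]
    · -- a₂ is the max
      have htop : 0 < a₂ := lt_of_lt_of_le hA (max_le (max_le h12 le_rfl) h23)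
      obtain ⟨Wa, Wb, Wc, hGa, hGb, hGc, hsum', hlt⟩ :=
        main_case G₂ G₁ G₃ hp₂ hp₁ hp₃ (by linarith) hodd hk3 hle₂ hle₁ hle₃
          htop h12 h23
      have := hcommon Wb Wa Wc hGb hGa hGc (fun x y => by linarith [hsum' x y])
      linarith [hlt, this]
  · rcases le_total a₁ a₃ with h13 | h13
    · -- a₃ is the max
      have htop : 0 < a₃ := lt_of_lt_of_le hA (max_le (max_le h13 (h12.trans h13)) le_rfl)
      obtain ⟨Wa, Wb, Wc, hGa, hGb, hGc, hsum', hlt⟩ :=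
        main_case G₃ G₁ G₂ hp₃ hp₁ hp₂ (by linarith) hodd hk3 hle₃ hle₁ hle₂
          htop h13 (h12.trans h13)
      have := hcommon Wb Wc Wa hGb hGc hGa (fun x y => by linarith [hsum' x y])
      linarith [hlt, this]
    · -- a₁ is the max
      have htop : 0 < a₁ := lt_of_lt_of_le hA (max_le (max_le le_rfl h12) h13)
      obtain ⟨Wa, Wb, Wc, hGa, hGb, hGc, hsum', hlt⟩ :=
        main_case G₁ G₂ G₃ hp₁ hp₂ hp₃ hsum hodd hk3 hle₁ hle₂ hle₃
          htop h12 h13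
      have := hcommon Wa Wb Wc hGa hGb hGc hsum'
      linarith [hlt, this]
end
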